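/- Let δ ∈ (0,1) and let (δ_k), (l_k) be strictly increasing sequences of positive reals with 17δ/16 < l₁/8. Let f₁, f₂ : ℂ → ℂ be entire functions such that |e^{f₁(z)} − δ_{k+1}| < l_{k+1}/4 for every z ∈ B_k and every k ∈ ℕ, and e^{Re f₂(w)} < 17/16 for every w ∈ ℝ. Then for every k ∈ ℕ, F maps B_k' into B_{k+1}'; more precisely, F(B_k') ⊆ {(z,w) ∈ ℂ×ℝ : |z − δ_{k+1}| ≤ l_{k+1}/2 and |w| < 17/16}, which is contained in B_{k+1}'. -/

import Mathlib

open Set Filter Topology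

/-- With `F(z,w) = (e^{f₁(z)} + δ e^{Re f₂(w)}, e^{Re f₂(w)})`, the polydisc
`Bₖ'` is mapped into a smaller polydisc contained in `B_{k+1}'`. -/
theorem F_maps_Bk_into_Bk_succ
    (δ : ℝ) (hδ : δ ∈ Set.Ioo (0 : ℝ) 1)
    (δs ls : ℕ → ℝ)
    (hδmono : StrictMono δs) (hδpos : ∀ k, 0 < δs k)
    (hlmono : StrictMono ls) (hlpos : ∀ k, 0 < ls k)
    (hδl : 17 * δ / 16 < ls 0 / 8)
    (f₁ f₂ : ℂ → ℂ) (hf₁ : Differentiable ℂ f₁) (hf₂ : Differentiable ℂ f₂)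
    (hB : ∀ k, ∀ z : ℂ, ‖z - δs k‖ ≤ ls k →
      ‖Complex.exp (f₁ z) - δs (k + 1)‖ < ls (k + 1) / 4)
    (hR : ∀ w : ℝ, Real.exp ((f₂ (w : ℂ)).re) < 17 / 16)
    (F : ℂ × ℝ → ℂ × ℝ)
    (hF : ∀ p : ℂ × ℝ,
      F p = (Complex.exp (f₁ p.1) + (δ * Real.exp ((f₂ (p.2 : ℂ)).re) : ℝ),
             Real.exp ((f₂ (p.2 : ℂ)).re)))
    (B' : ℕ → Set (ℂ × ℝ))
    (hB' : ∀ k, B' k = {p : ℂ × ℝ |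
      ‖p.1 - δs k‖ ≤ ls k ∧ |p.2| < ls k / (8 * δ)}) :
    ∀ k, F '' B' k ⊆
        {p : ℂ × ℝ | ‖p.1 - δs (k + 1)‖ ≤ ls (k + 1) / 2 ∧ |p.2| < 17 / 16} ∧
      {p : ℂ × ℝ | ‖p.1 - δs (k + 1)‖ ≤ ls (k + 1) / 2 ∧ |p.2| < 17 / 16} ⊆
        B' (k + 1) := by

  intro k
  obtain ⟨hδ0, hδ1⟩ := hδ
  have hls0 : ls 0 ≤ ls (k + 1) := hlmono.monotone (Nat.zero_le _)
  have hkey : 17 * δ / 16 < ls (k + 1) / 8 := lt_of_lt_of_le hδl (by linarith)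
  constructor
  · rintro q ⟨p, hp, rfl⟩
    rw [hB' k] at hp
    obtain ⟨hp1, hp2⟩ := hp
    rw [hF]
    have h1 := hB k p.1 hp1
    have h2 := hR p.2
    have h2' : 0 < Real.exp ((f₂ (p.2 : ℂ)).re) := Real.exp_pos _
    constructor
    · show ‖Complex.exp (f₁ p.1) + _ - δs (k + 1)‖ ≤ ls (k + 1) / 2
      have : Complex.exp (f₁ p.1) + ((δ * Real.exp ((f₂ (p.2 : ℂ)).re) : ℝ) : ℂ) - δs (k + 1)
          = (Complex.exp (f₁ p.1) - δs (k + 1)) + ((δ * Real.exp ((f₂ (p.2 : ℂ)).re) : ℝ) : ℂ) := by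
        ring
      rw [this]
      calc ‖_‖ ≤ ‖Complex.exp (f₁ p.1) - δs (k + 1)‖
            + ‖((δ * Real.exp ((f₂ (p.2 : ℂ)).re) : ℝ) : ℂ)‖ := norm_add_le _ _
        _ ≤ ls (k + 1) / 4 + |δ * Real.exp ((f₂ (p.2 : ℂ)).re)| := by
            rw [Complex.norm_real, Real.norm_eq_abs]; linarith
        _ ≤ ls (k + 1) / 2 := by
            rw [abs_of_pos (by positivity)]
            nlinarith
    · show |Real.exp ((f₂ (p.2 : ℂ)).re)| < 17 / 16
      rw [abs_of_pos h2']; exact h2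
  · rintro q ⟨hq1, hq2⟩
    rw [hB' (k + 1)]
    refine ⟨le_trans hq1 (by linarith [hlpos (k + 1)]), ?_⟩
    have : (17 : ℝ) / 16 < ls (k + 1) / (8 * δ) := by
      rw [lt_div_iff₀ (by positivity)]
      nlinarith
    linarith
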